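/- arXiv:0711.4999 — 2 statements merged into one kernel-verified Lean document; each statement's English description precedes it below -/
import Mathlib

section
/- Let m ≥ 1 and let a_0, a_1, …, a_m be real numbers with a_0 = 1/2, 1/2 ≤ a_1 < 1, and satisfying the recurrence (1 − a_{i+1})/(1 − a_i) = a_{i−1}/a_i for 1 ≤ i ≤ m−1. Then: (i) the sequence is nondecreasing and lies in [1/2, 1); (ii) the successive ratios are decreasing, i.e. a_i/a_{i+1} ≥ a_{i−1}/a_i for 1 ≤ i ≤ m−1; and (iii) (a_m/a_{m−1})^m ≤ a_m/a_0 ≤ 2. -/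
/-- Properties of the sequence `a_0 = 1/2 ≤ a_1 < 1` with
`(1 − a_{i+1})/(1 − a_i) = a_{i−1}/a_i` for `1 ≤ i ≤ m−1`:
(i) it is nondecreasing and lies in `[1/2, 1)`;
(ii) the successive ratios decrease: `a_{i−1}/a_i ≤ a_i/a_{i+1}`;
(iii) `(a_m/a_{m−1})^m ≤ a_m/a_0 ≤ 2`. -/
theorem stmt15 (m : ℕ) (hm : 1 ≤ m) (a : ℕ → ℝ)
    (h0 : a 0 = 1 / 2) (h1 : 1 / 2 ≤ a 1) (h1' : a 1 < 1)
    (hrec : ∀ i : ℕ, 1 ≤ i → i ≤ m - 1 →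
      (1 - a (i + 1)) / (1 - a i) = a (i - 1) / a i) :
    (∀ i : ℕ, i < m → a i ≤ a (i + 1)) ∧
    (∀ i : ℕ, i ≤ m → 1 / 2 ≤ a i ∧ a i < 1) ∧
    (∀ i : ℕ, 1 ≤ i → i ≤ m - 1 → a (i - 1) / a i ≤ a i / a (i + 1)) ∧
    (a m / a (m - 1)) ^ m ≤ a m / a 0 ∧ a m / a 0 ≤ 2 := by
  -- main structural lemma
  have main : ∀ i : ℕ, 1 ≤ i → i ≤ m →
      1/2 ≤ a (i-1) ∧ a (i-1) ≤ a i ∧ a i < 1 := by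
    intro i hi
    induction i, hi using Nat.le_induction with
    | base =>
      intro _
      simp only [Nat.sub_self]
      exact ⟨le_of_eq h0.symm, h0 ▸ h1, h1'⟩
    | succ i hi ih =>
      intro him
      obtain ⟨hx, hxy, hy1⟩ := ih (le_trans (Nat.le_succ i) him)
      have hy2 : (1:ℝ)/2 ≤ a i := le_trans hx hxy
      have hrec' := hrec i hi (by omega)
      have hy0 : (0:ℝ) < a i := by linarith
      have hx0 : (0:ℝ) < a (i-1) := by linarith
      have heq : (1 - a (i+1)) * a i = a (i-1) * (1 - a i) :=
        (div_eq_div_iff (by linarith) hy0.ne').mp hrec'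
      have hz1 : a (i+1) < 1 := by nlinarith
      have hyz : a i ≤ a (i+1) := by nlinarith
      simp only [Nat.add_sub_cancel]
      exact ⟨hy2, hyz, hz1⟩
  have bounds : ∀ i : ℕ, i ≤ m → 1/2 ≤ a i ∧ a i < 1 := by
    intro i him
    rcases Nat.eq_zero_or_pos i with h | h
    · subst h; rw [h0]; norm_num
    · obtain ⟨hx, hxy, hy1⟩ := main i h him
      exact ⟨le_trans hx hxy, hy1⟩
  have apos : ∀ i : ℕ, i ≤ m → 0 < a i := fun i hi => by
    have := (bounds i hi).1; linarith
  have mono : ∀ i : ℕ, i < m → a i ≤ a (i + 1) := by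
    intro i hi
    have := main (i+1) (by omega) (by omega)
    simpa using this.2.1
  have ratio : ∀ i : ℕ, 1 ≤ i → i ≤ m - 1 → a (i - 1) / a i ≤ a i / a (i + 1) := by
    intro i hi him
    obtain ⟨hx, hxy, hy1⟩ := main i hi (by omega)
    obtain ⟨hy2, hyz, hz1⟩ := main (i+1) (by omega) (by omega)
    simp only [Nat.add_sub_cancel] at hyz
    have hy0 : (0:ℝ) < a i := by linarith
    have hx0 : (0:ℝ) < a (i-1) := by linarith
    have hz0 : (0:ℝ) < a (i+1) := by linarith
    have heq : (1 - a (i+1)) * a i = a (i-1) * (1 - a i) :=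
      (div_eq_div_iff (by linarith) hy0.ne').mp (hrec i hi him)
    rw [div_le_div_iff₀ hy0 hz0]
    have fac2 : 0 ≤ a i * a i - a (i-1) * (1 - a i) := by nlinarith
    have key : 0 ≤ (a i - a (i-1)) * (a i * a i - a (i-1) * (1 - a i)) :=
      mul_nonneg (by linarith) fac2
    have hmul : a (i-1) * a (i+1) * a i ≤ a i * a i * a i := by nlinarith
    exact le_of_mul_le_mul_right (by linarith [hmul]) hy0
  refine ⟨mono, bounds, ratio, ?_, ?_⟩
  · -- (a m / a (m-1))^m ≤ a m / a 0
    have chain : ∀ d j : ℕ, j + d = m → 1 ≤ j → a m / a (m-1) ≤ a j / a (j-1) := by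
      intro d
      induction d with
      | zero => intro j hj _; simp only [Nat.add_zero] at hj; subst hj; exact le_refl _
      | succ d ih =>
        intro j hj hj1
        have step : a (j+1) / a j ≤ a j / a (j-1) := by
          have hr := ratio j hj1 (by omega)
          have hy0 := apos j (by omega)
          have hx0 := apos (j-1) (by omega)
          have hz0 := apos (j+1) (by omega)
          rw [div_le_div_iff₀ hy0 hz0] at hr
          rw [div_le_div_iff₀ hy0 hx0]
          nlinarith
        exact le_trans (ih (j+1) (by omega) (by omega)) step
    have powlem : ∀ k : ℕ, k ≤ m → (a m / a (m-1))^k ≤ a m / a (m - k) := by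
      intro k
      induction k with
      | zero =>
        intro _
        simp [Nat.sub_zero, div_self (apos m le_rfl).ne']
      | succ k ih =>
        intro hk
        have hkm : k ≤ m := by omega
        have hr0 : 0 ≤ a m / a (m-1) :=
          div_nonneg (apos m le_rfl).le (apos (m-1) (by omega)).le
        have hch := chain k (m - k) (by omega) (by omega)
        have hmk : m - k - 1 = m - (k+1) := by omega
        rw [hmk] at hch
        have hprod : a m / a (m - k) * (a (m-k) / a (m - (k+1))) = a m / a (m - (k+1)) := by
          have h1 := (apos (m-k) (by omega)).ne'
          field_simp
        calc (a m / a (m-1))^(k+1)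
            = (a m / a (m-1))^k * (a m / a (m-1)) := by ring
          _ ≤ (a m / a (m-k)) * (a (m-k) / a (m - (k+1))) := by
              apply mul_le_mul (ih hkm) hch hr0
              exact div_nonneg (apos m le_rfl).le (apos (m-k) (by omega)).le
          _ = a m / a (m - (k+1)) := hprod
    have := powlem m le_rfl
    simpa using this
  · rw [h0]
    have := (bounds m le_rfl).2
    rw [div_le_iff₀ (by norm_num : (0:ℝ) < 1/2)]
    linarith
end

section
/- Fix an integer m ≥ 1 and define f : [1/2, 1) → ℝ by f(a) = a_m, where a_0 = 1/2, a_1 = a, and a_{i+1} = 1 − (1 − a_i)·a_{i−1}/a_i for 1 ≤ i ≤ m−1. Then f is continuous and strictly increasing on [1/2,1), f(1/2) = 1/2, f(a) → 1 as a → 1⁻, and consequently for every y ∈ [1/2, 1) there exists a ∈ [1/2, 1) with f(a) = y. -/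
/-- The sequence `a_0 = 1/2`, `a_1 = a`,
`a_{i+1} = 1 − (1 − a_i)·a_{i−1}/a_i` determined by the seed `a`. -/
noncomputable def seedSeq (a : ℝ) : ℕ → ℝ
  | 0 => 1 / 2
  | 1 => a
  | (i + 2) => 1 - (1 - seedSeq a (i + 1)) * seedSeq a i / seedSeq a (i + 1)

lemma seedSeq_zero (a : ℝ) : seedSeq a 0 = 1 / 2 := rfl
lemma seedSeq_one (a : ℝ) : seedSeq a 1 = a := rfl
lemma seedSeq_step (a : ℝ) (i : ℕ) :
    seedSeq a (i + 2) = 1 - (1 - seedSeq a (i + 1)) * seedSeq a i / seedSeq a (i + 1) := rfl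

/-- Bounds and the key invariant `(1 - a_{i+1}) a_i = (1-a)/2`. -/
lemma seed_key (a : ℝ) (h1 : 1 / 2 ≤ a) (h2 : a < 1) (i : ℕ) :
    (1 / 2 ≤ seedSeq a i ∧ seedSeq a i < 1) ∧
      (1 - seedSeq a (i + 1)) * seedSeq a i = (1 - a) / 2 := by
  induction i with
  | zero =>
    refine ⟨⟨le_refl _, by norm_num [seedSeq_zero]⟩, ?_⟩
    rw [seedSeq_one, seedSeq_zero]; ring
  | succ i ih =>
    obtain ⟨⟨hl, hu⟩, hinv⟩ := ih
    have hb : (0:ℝ) < seedSeq a i := by linarith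
    have hcl : 1 / 2 ≤ seedSeq a (i + 1) := by nlinarith
    have hcu : seedSeq a (i + 1) < 1 := by nlinarith
    have hcne : seedSeq a (i + 1) ≠ 0 := by linarith
    refine ⟨⟨hcl, hcu⟩, ?_⟩
    rw [seedSeq_step]
    field_simp
    linarith [hinv]

lemma seed_formula (a : ℝ) (h1 : 1 / 2 ≤ a) (h2 : a < 1) (i : ℕ) :
    seedSeq a (i + 1) = 1 - (1 - a) / (2 * seedSeq a i) := by
  obtain ⟨⟨hl, hu⟩, hinv⟩ := seed_key a h1 h2 i
  have hb : (0:ℝ) < seedSeq a i := by linarith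
  field_simp
  linarith [hinv]

lemma seed_mem (a : ℝ) (h1 : 1 / 2 ≤ a) (h2 : a < 1) (i : ℕ) :
    1 / 2 ≤ seedSeq a i ∧ seedSeq a i < 1 := (seed_key a h1 h2 i).1

lemma seed_ge (a : ℝ) (h1 : 1 / 2 ≤ a) (h2 : a < 1) (i : ℕ) (hi : 1 ≤ i) :
    a ≤ seedSeq a i := by
  induction i with
  | zero => exact absurd hi (by omega)
  | succ i ih =>
    rcases Nat.eq_zero_or_pos i with h | h
    · subst h; simp [seedSeq_one]
    · have hi' : 1 ≤ i := h
      have := ih hi'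
      have hb := (seed_mem a h1 h2 i).1
      rw [seed_formula a h1 h2 i]
      have hbpos : (0:ℝ) < 2 * seedSeq a i := by linarith
      have : (1 - a) / (2 * seedSeq a i) ≤ (1 - a) / 1 := by
        apply div_le_div_of_nonneg_left (by linarith) (by norm_num) (by linarith)
      have h1a : (1 - a) / 1 = 1 - a := by ring
      linarith [this, h1a ▸ this]

lemma seed_mono (a a' : ℝ) (h1 : 1 / 2 ≤ a) (h2 : a < 1) (h1' : 1 / 2 ≤ a')
    (h2' : a' < 1) (haa : a < a') (i : ℕ) (hi : 1 ≤ i) :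
    seedSeq a i < seedSeq a' i := by
  induction i with
  | zero => omega
  | succ i ih =>
    rcases Nat.eq_or_lt_of_le hi with h | h
    · have : i = 0 := by omega
      subst this
      simpa [seedSeq_one] using haa
    · have hi' : 1 ≤ i := by omega
      have hmono := ih hi'
      have hb := (seed_mem a h1 h2 i).1
      have hb' := (seed_mem a' h1' h2' i).1
      rw [seed_formula a h1 h2 i, seed_formula a' h1' h2' i]
      have : (1 - a') / (2 * seedSeq a' i) < (1 - a) / (2 * seedSeq a i) := by
        exact div_lt_div₀ (by linarith) (by linarith) (by linarith) (by linarith)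
      linarith

lemma seed_cont (i : ℕ) :
    ContinuousOn (fun a : ℝ => seedSeq a i) (Set.Ico (1 / 2 : ℝ) 1) := by
  induction i using Nat.strong_induction_on with
  | _ i ih =>
    match i with
    | 0 => simpa [seedSeq_zero] using continuousOn_const
    | 1 => simpa [seedSeq_one] using (continuousOn_id' (α := ℝ) _)
    | (j + 2) =>
      have c1 := ih (j + 1) (by omega)
      have c0 := ih j (by omega)
      have hne : ∀ a ∈ Set.Ico (1 / 2 : ℝ) 1, seedSeq a (j + 1) ≠ 0 := by
        intro a ha
        have := (seed_mem a ha.1 ha.2 (j + 1)).1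
        linarith
      have : ContinuousOn (fun a : ℝ => 1 - (1 - seedSeq a (j + 1)) * seedSeq a j / seedSeq a (j + 1))
          (Set.Ico (1 / 2 : ℝ) 1) := by
        apply ContinuousOn.sub continuousOn_const
        exact ((continuousOn_const.sub c1).mul c0).div c1 hne
      simpa [seedSeq_step] using this

lemma seed_half (i : ℕ) : seedSeq (1 / 2) i = 1 / 2 ∧ seedSeq (1 / 2) (i + 1) = 1 / 2 := by
  induction i with
  | zero => exact ⟨rfl, rfl⟩
  | succ i ih =>
    refine ⟨ih.2, ?_⟩
    rw [seedSeq_step, ih.1, ih.2]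
    norm_num

/-- For `m ≥ 1`, the function `f(a) = a_m` (with `a_0 = 1/2`, `a_1 = a` and
`a_{i+1} = 1 − (1 − a_i)·a_{i−1}/a_i`) is continuous and strictly increasing on
`[1/2, 1)`, satisfies `f(1/2) = 1/2` and `f(a) → 1` as `a → 1⁻`, and consequently takes
every value `y ∈ [1/2, 1)`. -/
theorem stmt16 (m : ℕ) (hm : 1 ≤ m) :
    ContinuousOn (fun a : ℝ => seedSeq a m) (Set.Ico (1 / 2 : ℝ) 1) ∧
    StrictMonoOn (fun a : ℝ => seedSeq a m) (Set.Ico (1 / 2 : ℝ) 1) ∧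
    seedSeq (1 / 2) m = 1 / 2 ∧
    Filter.Tendsto (fun a : ℝ => seedSeq a m) (nhdsWithin 1 (Set.Iio 1)) (nhds 1) ∧
    ∀ y ∈ Set.Ico (1 / 2 : ℝ) 1, ∃ a ∈ Set.Ico (1 / 2 : ℝ) 1, seedSeq a m = y := by
  have hcont := seed_cont m
  have hmono : StrictMonoOn (fun a : ℝ => seedSeq a m) (Set.Ico (1 / 2 : ℝ) 1) := by
    intro a ha a' ha' h
    exact seed_mono a a' ha.1 ha.2 ha'.1 ha'.2 h m hm
  have hhalf : seedSeq (1 / 2) m = 1 / 2 := (seed_half m).1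
  have htends : Filter.Tendsto (fun a : ℝ => seedSeq a m) (nhdsWithin 1 (Set.Iio 1)) (nhds 1) := by
    have hev : ∀ᶠ a in nhdsWithin (1:ℝ) (Set.Iio 1), a ∈ Set.Ico (1/2 : ℝ) 1 := by
      filter_upwards [Ioo_mem_nhdsLT_of_mem (by norm_num : (1:ℝ) ∈ Set.Ioc (1/2 : ℝ) 1)]
        with a ha
      exact ⟨le_of_lt ha.1, ha.2⟩
    have hle : ∀ᶠ a in nhdsWithin (1:ℝ) (Set.Iio 1), a ≤ seedSeq a m := by
      filter_upwards [hev] with a ha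
      exact seed_ge a ha.1 ha.2 m hm
    have hle' : ∀ᶠ a in nhdsWithin (1:ℝ) (Set.Iio 1), seedSeq a m ≤ 1 := by
      filter_upwards [hev] with a ha
      exact le_of_lt (seed_mem a ha.1 ha.2 m).2
    have hid : Filter.Tendsto (fun a : ℝ => a) (nhdsWithin 1 (Set.Iio 1)) (nhds 1) :=
      nhdsWithin_le_nhds
    exact tendsto_of_tendsto_of_tendsto_of_le_of_le' hid tendsto_const_nhds hle hle'
  refine ⟨hcont, hmono, hhalf, htends, ?_⟩
  intro y hy
  rcases eq_or_lt_of_le hy.1 with h | h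
  · exact ⟨1/2, ⟨le_refl _, by norm_num⟩, by rw [hhalf, ← h]⟩
  · have hev : ∀ᶠ a in nhdsWithin (1:ℝ) (Set.Iio 1),
        a ∈ Set.Ioo (1/2 : ℝ) 1 ∧ y < seedSeq a m := by
      have h1 : ∀ᶠ a in nhdsWithin (1:ℝ) (Set.Iio 1), a ∈ Set.Ioo (1/2 : ℝ) 1 :=
        Ioo_mem_nhdsLT_of_mem (by norm_num : (1:ℝ) ∈ Set.Ioc (1/2 : ℝ) 1)
      have h2 : ∀ᶠ a in nhdsWithin (1:ℝ) (Set.Iio 1), y < seedSeq a m :=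
        htends.eventually (eventually_gt_nhds hy.2)
      exact h1.and h2
    obtain ⟨a', ha'⟩ := hev.exists
    obtain ⟨⟨ha'1, ha'2⟩, hya'⟩ := ha'
    have hsub : Set.Icc (1/2 : ℝ) a' ⊆ Set.Ico (1/2 : ℝ) 1 := by
      intro x hx; exact ⟨hx.1, lt_of_le_of_lt hx.2 ha'2⟩
    have hIVT := intermediate_value_Icc (le_of_lt ha'1) (hcont.mono hsub)
    have hy' : y ∈ Set.Icc (seedSeq (1/2) m) (seedSeq a' m) := by
      rw [hhalf]; exact ⟨hy.1, le_of_lt hya'⟩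
    obtain ⟨a, haIcc, hfa⟩ := hIVT hy'
    exact ⟨a, hsub haIcc, hfa⟩
end
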